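/- Let n ∈ ℕ, let W = {w_1, …, w_n, w, w'_2, w'_3, …, w'_n} and M = {m_1, …, m_n, m'_1, …, m'_n} be disjoint sets of size 2n, and let x = (x^i_j) and y = (y^i_j) be Boolean vectors indexed by P_n = {(i,j) : 1 ≤ i,j ≤ n, i ≠ j}. Construct partial preference lists: the list of w_i consists of all m_j with x^i_j = 1 (sorted by j) followed by m'_i; the list of w consists of all m'_j sorted by j; the list of each w'_i is empty; the list of m_j consists of all w_i with y^i_j = 1 (sorted by i); the list of m'_j consists of w_j followed by w. Then w is single in some stable marriage with respect to these preference lists if and only if there is no (i,j) ∈ P_n with x^i_j = y^i_j = 1. -/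

import Mathlib

/-- `listPref l a b`: in the (possibly partial) preference list `l`
(most-preferred first), `a` is preferred over `b`: `a` is on the list, and
either `b` is not on the list or `a` precedes `b` on it. -/
def listPref {α : Type} [DecidableEq α] (l : List α) (a b : α) : Prop :=
  a ∈ l ∧ (b ∈ l → l.idxOf a < l.idxOf b)

/-- A marriage between (a subset of) the women `Fin nw` and (a subset of) the
men `Fin nm`: `μ i = some j` means woman `i` is married to man `j`, and
`μ i = none` means woman `i` is single; no two women share a husband. -/
def IsMarriage {nw nm : ℕ} (μ : Fin nw → Option (Fin nm)) : Prop :=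
  ∀ i i' j, μ i = some j → μ i' = some j → i = i'

/-- Stability of a marriage `μ` with respect to (possibly partial) preference
lists `wL` (women's lists of men) and `mL` (men's lists of women): every married
participant is married to someone on their own list, and there is no blocking
pair, i.e. no pair `(i, j)`, with `j` on `i`'s list and `i` on `j`'s list, such
that woman `i` is single or prefers `j` over her spouse, and man `j` is single
or prefers `i` over his spouse. -/
def StableL {nw nm : ℕ} (wL : Fin nw → List (Fin nm)) (mL : Fin nm → List (Fin nw))
    (μ : Fin nw → Option (Fin nm)) : Prop :=
  (∀ i j, μ i = some j → j ∈ wL i ∧ i ∈ mL j) ∧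
  ¬∃ (i : Fin nw) (j : Fin nm),
      j ∈ wL i ∧ i ∈ mL j ∧
      (∀ j', μ i = some j' → listPref (wL i) j j') ∧
      (∀ i', μ i' = some j → listPref (mL j) i i')

/-- The women's preference lists built from `x` (0-indexed).  The women are
indexed by `Fin (n + n)`: index `u < n` is `w_{u+1}`, index `n` is the designated
woman `w`, and index `n + t` for `t ≥ 1` is `w'_{t+1}`.  The men are indexed by
`Fin (n + n)`: index `j < n` is `m_{j+1}` and index `n + j` is `m'_{j+1}`.
Woman `w_i`'s list is all `m_j` with `j ≠ i` and `x i j = 1` (sorted by `j`),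
followed by `m'_i`; the list of `w` is all the `m'_j`, sorted by `j`; the lists
of the `w'_i` are empty. -/
def sWL (n : ℕ) (x : ℕ → ℕ → Bool) : Fin (n + n) → List (Fin (n + n)) :=
  fun u =>
    if h : u.val < n then
      (((List.finRange n).filter
          (fun j => decide (j.val ≠ u.val) && x u.val j.val)).map (Fin.castAdd n))
        ++ [Fin.natAdd n ⟨u.val, h⟩]
    else if u.val = n then (List.finRange n).map (Fin.natAdd n)
    else []

/-- The men's preference lists built from `y` (0-indexed, same indexing as in
`sWL`).  Man `m_j`'s list is all `w_i` with `i ≠ j` and `y i j = 1` (sorted by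
`i`); man `m'_j`'s list is `w_j` followed by `w`. -/
def sML (n : ℕ) (y : ℕ → ℕ → Bool) : Fin (n + n) → List (Fin (n + n)) :=
  fun v =>
    if h : v.val < n then
      ((List.finRange n).filter
          (fun i => decide (i.val ≠ v.val) && y i.val v.val)).map (Fin.castAdd n)
    else
      [Fin.castAdd n ⟨v.val - n, by have := v.isLt; omega⟩,
       Fin.natAdd n ⟨0, by have := v.isLt; omega⟩]


section Aux

variable {n : ℕ}

lemma mem_map_castAdd (l : List (Fin n)) (v : Fin (n + n)) :
    v ∈ l.map (Fin.castAdd n) ↔ ∃ h : v.val < n, (⟨v.val, h⟩ : Fin n) ∈ l := by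
  simp only [List.mem_map]
  constructor
  · rintro ⟨a, ha, rfl⟩
    exact ⟨a.isLt, by simpa using ha⟩
  · rintro ⟨h, hm⟩
    exact ⟨⟨v.val, h⟩, hm, by ext; simp⟩

lemma mem_sWL_lt (x : ℕ → ℕ → Bool) {u : Fin (n + n)} (hu : u.val < n) (v : Fin (n + n)) :
    v ∈ sWL n x u ↔ (v.val < n ∧ v.val ≠ u.val ∧ x u.val v.val = true) ∨ v.val = n + u.val := by
  simp only [sWL, dif_pos hu, List.mem_append, mem_map_castAdd, List.mem_filter,
    List.mem_finRange, true_and, List.mem_singleton]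
  constructor
  · rintro (⟨h, hm⟩ | rfl)
    · simp only [Bool.and_eq_true, decide_eq_true_eq] at hm
      exact Or.inl ⟨h, hm.1, hm.2⟩
    · exact Or.inr rfl
  · rintro (⟨h1, h2, h3⟩ | hv)
    · exact Or.inl ⟨h1, by simp [h2, h3]⟩
    · right; ext; simp; omega

lemma mem_sWL_w (x : ℕ → ℕ → Bool) {u : Fin (n + n)} (hu : u.val = n) (v : Fin (n + n)) :
    v ∈ sWL n x u ↔ n ≤ v.val := by
  have h1 : ¬ u.val < n := by omega
  simp only [sWL, dif_neg h1, if_pos hu, List.mem_map, List.mem_finRange, true_and]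
  constructor
  · rintro ⟨a, rfl⟩; simp
  · intro hv
    refine ⟨⟨v.val - n, by have := v.isLt; omega⟩, ?_⟩
    ext; simp; omega

lemma mem_sML_lt (y : ℕ → ℕ → Bool) {v : Fin (n + n)} (hv : v.val < n) (u : Fin (n + n)) :
    u ∈ sML n y v ↔ u.val < n ∧ u.val ≠ v.val ∧ y u.val v.val = true := by
  simp only [sML, dif_pos hv, mem_map_castAdd, List.mem_filter, List.mem_finRange, true_and]
  constructor
  · rintro ⟨h, hm⟩
    simp only [Bool.and_eq_true, decide_eq_true_eq] at hm
    exact ⟨h, hm.1, hm.2⟩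
  · rintro ⟨h1, h2, h3⟩
    exact ⟨h1, by simp [h2, h3]⟩

lemma sML_ge (y : ℕ → ℕ → Bool) {v : Fin (n + n)} (hv : ¬ v.val < n) :
    sML n y v = [Fin.castAdd n ⟨v.val - n, by have := v.isLt; omega⟩,
        Fin.natAdd n ⟨0, by have := v.isLt; omega⟩] := by
  simp only [sML, dif_neg hv]

lemma not_listPref_pair {α : Type} [DecidableEq α] {a b : α} (hab : a ≠ b) :
    ¬ listPref [a, b] b a := by
  intro ⟨_, h⟩
  have := h (by simp)
  rw [List.idxOf_cons_self] at this
  rw [List.idxOf_cons_ne _ (by simpa using hab), List.idxOf_cons_self] at this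
  omega

lemma listPref_append_last {α : Type} [DecidableEq α] {l : List α} {v e : α}
    (hv : v ∈ l) (he : e ∉ l) : listPref (l ++ [e]) v e := by
  refine ⟨List.mem_append_left _ hv, fun _ => ?_⟩
  rw [List.idxOf_append_of_mem hv, List.idxOf_append_of_notMem he]
  have := List.idxOf_lt_length_iff.mpr hv
  simp only [List.idxOf_cons_self]
  omega

/-- The standard stable marriage: each `w_k` married to `m'_k`, everyone else single. -/
def stdMu (n : ℕ) : Fin (n + n) → Option (Fin (n + n)) :=
  fun u => if h : u.val < n then some (Fin.natAdd n ⟨u.val, h⟩) else none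

lemma stdMu_pos {u : Fin (n + n)} (h : u.val < n) :
    stdMu n u = some (Fin.natAdd n ⟨u.val, h⟩) := by
  simp only [stdMu, dif_pos h]

lemma stdMu_neg {u : Fin (n + n)} (h : ¬ u.val < n) : stdMu n u = none := by
  simp only [stdMu, dif_neg h]

end Aux

/-- The designated woman `w` is single in some stable marriage with respect to the
preference lists constructed from `x` and `y` if and only if there is no pair
`(i, j)` with `i ≠ j` and `x^i_j = y^i_j = 1`. -/
theorem single_iff_disjoint (n : ℕ) (hn : 0 < n) (x y : ℕ → ℕ → Bool) :
    (∃ μ : Fin (n + n) → Option (Fin (n + n)),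
        IsMarriage μ ∧ StableL (sWL n x) (sML n y) μ ∧ μ (Fin.natAdd n ⟨0, hn⟩) = none) ↔
      ¬∃ i j : ℕ, i < n ∧ j < n ∧ i ≠ j ∧ x i j = true ∧ y i j = true := by
  constructor
  · -- forward direction
    rintro ⟨μ, hμ, ⟨hst1, hst2⟩, hw⟩ ⟨i, j, hi, hj, hij, hx, hy⟩
    set w : Fin (n + n) := Fin.natAdd n ⟨0, hn⟩ with hwdef
    have hwval : w.val = n := rfl
    -- Step A: every w_k is married to m'_k
    have stepA : ∀ k (hk : k < n), μ ⟨k, by omega⟩ = some ⟨n + k, by omega⟩ := by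
      intro k hk
      set j0 : Fin (n + n) := ⟨n + k, by omega⟩ with hj0
      have hj0n : ¬ j0.val < n := by simp [hj0]
      have hml : sML n y j0 = [Fin.castAdd n ⟨j0.val - n, by have := j0.isLt; omega⟩,
          Fin.natAdd n ⟨0, by have := j0.isLt; omega⟩] := sML_ge y hj0n
      by_contra hne
      apply hst2
      refine ⟨w, j0, ?_, ?_, ?_, ?_⟩
      · rw [mem_sWL_w x hwval]; simp [hj0]
      · rw [hml]
        exact List.mem_cons_of_mem _ (List.mem_singleton.mpr (by ext; rfl))
      · intro j' hj'; rw [hw] at hj'; exact absurd hj' (by simp)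
      · intro i' hi'
        have hmem := (hst1 i' j0 hi').2
        rw [hml] at hmem
        simp only [List.mem_cons, List.not_mem_nil, or_false] at hmem
        have hi'k : i' = Fin.castAdd n ⟨j0.val - n, by have := j0.isLt; omega⟩ := by
          rcases hmem with h | h
          · exact h
          · exfalso; rw [h] at hi'
            have heq : (Fin.natAdd n ⟨0, by have := j0.isLt; omega⟩ : Fin (n+n)) = w := rfl
            rw [heq, hw] at hi'; simp at hi'
        exfalso
        apply hne
        have heq2 : (⟨k, by omega⟩ : Fin (n+n)) = i' := by
          rw [hi'k]; ext; simp [hj0]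
        rw [heq2, hi']
    -- Step B: every m_j is single
    have stepB : ∀ (j' : Fin (n + n)), j'.val < n → ∀ i', μ i' ≠ some j' := by
      intro j' hj' i' hi'
      have hmem := (hst1 i' j' hi').2
      rw [mem_sML_lt y hj'] at hmem
      have h1 := stepA i'.val hmem.1
      have hi'eq : (⟨i'.val, by omega⟩ : Fin (n + n)) = i' := by ext; rfl
      rw [hi'eq, hi'] at h1
      simp only [Option.some.injEq] at h1
      have h2 : j'.val = n + i'.val := congrArg Fin.val h1
      omega
    -- the blocking pair (w_i, m_j)
    apply hst2
    set wi : Fin (n + n) := ⟨i, by omega⟩ with hwi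
    set mj : Fin (n + n) := ⟨j, by omega⟩ with hmj
    refine ⟨wi, mj, ?_, ?_, ?_, ?_⟩
    · rw [mem_sWL_lt x (show wi.val < n from hi)]
      exact Or.inl ⟨hj, show j ≠ i by omega, hx⟩
    · rw [mem_sML_lt y (show mj.val < n from hj)]
      exact ⟨hi, show i ≠ j by omega, hy⟩
    · intro j' hj'
      rw [stepA i hi] at hj'
      simp only [Option.some.injEq] at hj'
      subst hj'
      have hwiv : wi.val < n := hi
      have hmem : (⟨mj.val, hj⟩ : Fin n) ∈ (List.finRange n).filter
          (fun j => decide (j.val ≠ wi.val) && x wi.val j.val) := by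
        simp only [List.mem_filter, List.mem_finRange, true_and, Bool.and_eq_true,
          decide_eq_true_eq]
        exact ⟨show j ≠ i by omega, hx⟩
      have hmj_mem : mj ∈ ((List.finRange n).filter
          (fun j => decide (j.val ≠ wi.val) && x wi.val j.val)).map (Fin.castAdd n) := by
        rw [mem_map_castAdd]; exact ⟨hj, hmem⟩
      have hnot : Fin.natAdd n (⟨wi.val, hwiv⟩ : Fin n) ∉ ((List.finRange n).filter
          (fun j => decide (j.val ≠ wi.val) && x wi.val j.val)).map (Fin.castAdd n) := by
        rw [mem_map_castAdd]
        rintro ⟨h, -⟩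
        simp at h
      have hlp := listPref_append_last hmj_mem hnot
      have hlist : sWL n x wi = ((List.finRange n).filter
          (fun j => decide (j.val ≠ wi.val) && x wi.val j.val)).map (Fin.castAdd n)
          ++ [Fin.natAdd n ⟨wi.val, hwiv⟩] := by
        simp only [sWL, dif_pos hwiv]
      rw [hlist]
      convert hlp using 2
      rfl
    · intro i' hi'
      exact absurd hi' (stepB mj hj i')
  · -- backward direction
    intro hno
    refine ⟨stdMu n, ?_, ⟨?_, ?_⟩, stdMu_neg (by simp)⟩
    · intro i i' j hi hi'
      by_cases h1 : i.val < n
      · by_cases h2 : i'.val < n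
        · rw [stdMu_pos h1] at hi; rw [stdMu_pos h2] at hi'
          simp only [Option.some.injEq] at hi hi'
          have h3 : n + i.val = n + i'.val := by
            rw [← hi'] at hi; exact congrArg Fin.val hi
          ext; omega
        · rw [stdMu_neg h2] at hi'; simp at hi'
      · rw [stdMu_neg h1] at hi; simp at hi
    · intro i j hij
      by_cases h1 : i.val < n
      · rw [stdMu_pos h1] at hij
        simp only [Option.some.injEq] at hij
        subst hij
        constructor
        · rw [mem_sWL_lt x h1]; right; rfl
        · rw [sML_ge y (show ¬ (Fin.natAdd n (⟨i.val, h1⟩ : Fin n)).val < n by simp)]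
          apply List.mem_cons.mpr; left; ext; simp
      · rw [stdMu_neg h1] at hij; simp at hij
    · rintro ⟨i, j, hjw, him, hpw, hpm⟩
      by_cases h1 : i.val < n
      · rw [mem_sWL_lt x h1] at hjw
        rcases hjw with ⟨hjn, hjne, hxij⟩ | hje
        · rw [mem_sML_lt y hjn] at him
          exact hno ⟨i.val, j.val, h1, hjn, fun h => him.2.1 (by omega), hxij, him.2.2⟩
        · have hji : j = Fin.natAdd n ⟨i.val, h1⟩ := by ext; simp at hje ⊢; omega
          have hpw2 := hpw (Fin.natAdd n ⟨i.val, h1⟩) (stdMu_pos h1)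
          rw [hji] at hpw2
          exact absurd (hpw2.2 hpw2.1) (lt_irrefl _)
      · by_cases h2 : i.val = n
        · rw [mem_sWL_w x h2] at hjw
          have hjn : ¬ j.val < n := by omega
          have hk : j.val - n < n := by have := j.isLt; omega
          have hmuk : stdMu n (Fin.castAdd n (⟨j.val - n, hk⟩ : Fin n)) = some j := by
            rw [stdMu_pos (show (Fin.castAdd n (⟨j.val - n, hk⟩ : Fin n)).val < n from hk)]
            congr 1; ext; simp; omega
          have hpm2 := hpm _ hmuk
          rw [sML_ge y hjn] at hpm2
          have hieq : i = Fin.natAdd n ⟨0, by have := j.isLt; omega⟩ := by ext; simpa using h2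
          rw [hieq] at hpm2
          refine not_listPref_pair ?_ (by convert hpm2 using 3)
          intro h
          have := congrArg Fin.val h
          simp at this
          omega
        · have hnil : sWL n x i = [] := by
            simp only [sWL, dif_neg h1, if_neg h2]
          rw [hnil] at hjw; simp at hjw
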